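/- For every positive integer r and every finite simple graph H, there exists a constant c = c(r,H) > 0 such that for every H-minor-free graph G, there exists a collection C of r-element subsets of E(G) with |C| ≤ c·|V(G)| such that for every subgraph R of G of minimum degree at least r, some member of C is a subset of E(R). -/

import Mathlib

open Filter

noncomputable section

/-- `G` has a nonempty subgraph of minimum degree at least `r`. -/
def HasSubMinDeg {V : Type} (G : SimpleGraph V) (r : ℕ) : Prop :=
  ∃ R : G.Subgraph, R.verts.Nonempty ∧ ∀ v ∈ R.verts, r ≤ (R.neighborSet v).ncard

/-- `G` is `d`-degenerate: it has no subgraph of minimum degree at least `d+1`. -/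
def IsDegen {V : Type} (G : SimpleGraph V) (d : ℕ) : Prop :=
  ¬ HasSubMinDeg G (d + 1)

/-- `G` has a nonempty `r`-regular subgraph. -/
def HasRegSub {V : Type} (G : SimpleGraph V) (r : ℕ) : Prop :=
  ∃ R : G.Subgraph, R.verts.Nonempty ∧ ∀ v ∈ R.verts, (R.neighborSet v).ncard = r

/-- `G` is `r`-choosable. -/
def Choosable {V : Type} (G : SimpleGraph V) (r : ℕ) : Prop :=
  ∀ L : V → Finset ℕ, (∀ v, r ≤ (L v).card) →
    ∃ c : V → ℕ, (∀ v, c v ∈ L v) ∧ ∀ ⦃u w⦄, G.Adj u w → c u ≠ c w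

/-- `H` is a minor of `G`: there are disjoint nonempty connected branch sets,
one for each vertex of `H`, with edges of `H` realized by edges of `G`. -/
def IsMinorOf {W V : Type} (H : SimpleGraph W) (G : SimpleGraph V) : Prop :=
  ∃ B : W → Set V,
    (∀ w, (B w).Nonempty) ∧
    (∀ ⦃w w'⦄, w ≠ w' → Disjoint (B w) (B w')) ∧
    (∀ w, (G.induce (B w)).Connected) ∧
    ∀ ⦃w w'⦄, H.Adj w w' → ∃ u ∈ B w, ∃ x ∈ B w', G.Adj u x

/-- `G` contains a subgraph isomorphic to `H`. -/
def IsSubCopyOf {W V : Type} (H : SimpleGraph W) (G : SimpleGraph V) : Prop :=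
  ∃ f : W ↪ V, ∀ ⦃a b⦄, H.Adj a b → G.Adj (f a) (f b)

/-- The join `G ∨ H` of two graphs. -/
def gJoin {V W : Type} (G : SimpleGraph V) (H : SimpleGraph W) : SimpleGraph (V ⊕ W) where
  Adj x y :=
    match x, y with
    | Sum.inl a, Sum.inl b => G.Adj a b
    | Sum.inr a, Sum.inr b => H.Adj a b
    | Sum.inl _, Sum.inr _ => True
    | Sum.inr _, Sum.inl _ => True
  symm := by
    constructor
    rintro (a | a) (b | b) h
    · exact h.symm
    · trivial
    · trivial
    · exact h.symm
  loopless := by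
    constructor
    rintro (a | a) h
    · exact h.ne rfl
    · exact h.ne rfl

/-- The disjoint union `tG` of `t` copies of `G`. -/
def gCopies {V : Type} (t : ℕ) (G : SimpleGraph V) : SimpleGraph (Fin t × V) where
  Adj x y := x.1 = y.1 ∧ G.Adj x.2 y.2
  symm := by
    constructor
    rintro x y ⟨h1, h2⟩
    exact ⟨h1.symm, h2.symm⟩
  loopless := by
    constructor
    rintro x ⟨-, h⟩
    exact h.ne rfl

/-- The graph `G ∧_k Z`, obtained from `k` disjoint copies of `G` by identifying
the `k` copies of each vertex of `Z`. -/
def wedgePow {V : Type} (G : SimpleGraph V) (Z : Set V) (k : ℕ) :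
    SimpleGraph (↥Z ⊕ (Fin k × ↥(Zᶜ : Set V))) where
  Adj x y :=
    match x, y with
    | Sum.inl z, Sum.inl z' => G.Adj z.1 z'.1
    | Sum.inl z, Sum.inr p => G.Adj z.1 p.2.1
    | Sum.inr p, Sum.inl z => G.Adj p.2.1 z.1
    | Sum.inr p, Sum.inr q => p.1 = q.1 ∧ G.Adj p.2.1 q.2.1
  symm := by
    constructor
    rintro (z | p) (z' | q) h
    · exact h.symm
    · exact h.symm
    · exact h.symm
    · exact ⟨h.1.symm, h.2.symm⟩
  loopless := by
    constructor
    rintro (z | p) h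
    · exact h.ne rfl
    · exact h.2.ne rfl

/-- `G` is (isomorphic to) the graph obtained from `W` by adding isolated vertices. -/
def ExtIsolated {VW V : Type} (W : SimpleGraph VW) (G : SimpleGraph V) : Prop :=
  ∃ f : VW ↪ V, (∀ a b, G.Adj (f a) (f b) ↔ W.Adj a b) ∧
    ∀ x y, G.Adj x y → ∃ a b, f a = x ∧ f b = y

/-- Membership in the family `𝓕(G, F₀, r)`: `F` is obtained from the disjoint union of `G`
and `F₀` by adding edges between the two sides so that every vertex of `F₀` has degree
at least `r`. -/
def InFamF {V W : Type} (G : SimpleGraph V) (F0 : SimpleGraph W) (r : ℕ)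
    (F : SimpleGraph (V ⊕ W)) : Prop :=
  (∀ a b, F.Adj (Sum.inl a) (Sum.inl b) ↔ G.Adj a b) ∧
  (∀ a b, F.Adj (Sum.inr a) (Sum.inr b) ↔ F0.Adj a b) ∧
  ∀ w : W, r ≤ (F.neighborSet (Sum.inr w)).ncard

/-- The type of `F ∈ 𝓕(G, F₀, r)`: the number of edges incident with the `F₀`-side. -/
def typeOfF {V W : Type} (F : SimpleGraph (V ⊕ W)) : ℕ :=
  {e ∈ F.edgeSet | ∃ w : W, (Sum.inr w : V ⊕ W) ∈ e}.ncard

/-- The minimum size of a vertex cover of `H`. -/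
def vcNum {V : Type} [Fintype V] (H : SimpleGraph V) : ℕ :=
  sInf {k | ∃ S : Finset V, S.card = k ∧ ∀ ⦃a b⦄, H.Adj a b → a ∈ S ∨ b ∈ S}

/-- `H` has minimum degree at least `r`. -/
def MinDegGE {V : Type} (H : SimpleGraph V) (r : ℕ) : Prop :=
  ∀ v, r ≤ (H.neighborSet v).ncard

open Classical in
/-- The probability that the random subgraph `G(p)` (each edge kept independently with
probability `p`) satisfies the property `P`. -/
def edgeProb {n : ℕ} (G : SimpleGraph (Fin n)) (p : ℝ)
    (P : SimpleGraph (Fin n) → Prop) : ℝ :=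
  ∑ S ∈ (Set.toFinite G.edgeSet).toFinset.powerset,
    if P (SimpleGraph.fromEdgeSet (S : Set (Sym2 (Fin n)))) then
      p ^ S.card * (1 - p) ^ ((Set.toFinite G.edgeSet).toFinset.card - S.card)
    else 0

/-- Condition (1) of the upper-threshold definition. -/
def CondOne (𝒢 : ∀ n : ℕ, Set (SimpleGraph (Fin n)))
    (P : ∀ n : ℕ, SimpleGraph (Fin n) → Prop) (pstar : ℕ → ℝ) : Prop :=
  ∀ G : (n : ℕ) → SimpleGraph (Fin n), (∀ n, G n ∈ 𝒢 n) →
    ∀ q : ℕ → ℝ, (∀ n, q n ∈ Set.Icc (0 : ℝ) 1) →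
      Tendsto (fun n => pstar n / q n) atTop atTop →
      Tendsto (fun n => edgeProb (G n) (q n) (P n)) atTop (nhds 1)

/-- Condition (2) of the upper-threshold definition. -/
def CondTwo (𝒢 : ∀ n : ℕ, Set (SimpleGraph (Fin n)))
    (P : ∀ n : ℕ, SimpleGraph (Fin n) → Prop) (pstar : ℕ → ℝ) : Prop :=
  ∃ G : (n : ℕ) → SimpleGraph (Fin n), (∀ n, G n ∈ 𝒢 n) ∧
    ∀ q : ℕ → ℝ, (∀ n, q n ∈ Set.Icc (0 : ℝ) 1) →
      Tendsto (fun n => q n / pstar n) atTop atTop →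
      Tendsto (fun n => edgeProb (G n) (q n) (P n)) atTop (nhds 0)

/-- `pstar` is an upper threshold for the class `𝒢` and the property `P`. -/
def IsUpperThreshold (𝒢 : ∀ n : ℕ, Set (SimpleGraph (Fin n)))
    (P : ∀ n : ℕ, SimpleGraph (Fin n) → Prop) (pstar : ℕ → ℝ) : Prop :=
  CondOne 𝒢 P pstar ∧ CondTwo 𝒢 P pstar

/-- The class of `H`-minor-free graphs (on vertex sets `Fin n`). -/
def MClass {W : Type} (H : SimpleGraph W) (n : ℕ) : Set (SimpleGraph (Fin n)) :=
  {G | ¬ IsMinorOf H G}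

/-- A `(c,q,r)`-good signature collection for `G`. -/
def GoodSig {V : Type} [Fintype V] (G : SimpleGraph V) (c : ℝ) (q r : ℕ)
    (C : Finset (Finset (Sym2 V))) : Prop :=
  (∀ S ∈ C, S.card = q ∧ (S : Set (Sym2 V)) ⊆ G.edgeSet) ∧
  (C.card : ℝ) ≤ c * (Fintype.card V : ℝ) ∧
  ∀ R : G.Subgraph, R.verts.Nonempty → (∀ v ∈ R.verts, r ≤ (R.neighborSet v).ncard) →
    ∃ S ∈ C, (S : Set (Sym2 V)) ⊆ R.edgeSet

/-- The class `𝒢` has `(q,r)`-good signature collections. -/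
def HasGoodSigs (𝒢 : ∀ n : ℕ, Set (SimpleGraph (Fin n))) (q r : ℕ) : Prop :=
  ∃ c : ℝ, ∀ n : ℕ, ∀ G ∈ 𝒢 n, ∃ C, GoodSig G c q r C

/-- The neighborhood `N_G(S)` of a set of vertices. -/
def setNbhd {V : Type} (G : SimpleGraph V) (S : Set V) : Set V :=
  {v | v ∉ S ∧ ∃ u ∈ S, G.Adj u v}

/-- The average degree `2|E(G)|/|V(G)|` of a finite graph. -/
def avgDeg {V : Type} [Fintype V] (G : SimpleGraph V) : ℝ :=
  2 * (G.edgeSet.ncard : ℝ) / (Fintype.card V : ℝ)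

/-- `N_{G[X]}^{≤ m}[x]`: the vertices reachable from `x` by a walk of length at most `m`
all of whose vertices lie in `X`. -/
def ballIn {V : Type} (G : SimpleGraph V) (X : Set V) (x : V) (m : ℤ) : Set V :=
  {y | ∃ w : G.Walk x y, (∀ z ∈ w.support, z ∈ X) ∧ (w.length : ℤ) ≤ m}

/-- `G` contains a subgraph isomorphic to an `S`-subdivision of `H`, where `S` is the
set of allowed numbers of subdivisions per edge. -/
def ContainsSubdiv {VH V : Type} (G : SimpleGraph V) (H : SimpleGraph VH)
    (S : ℕ → Prop) : Prop :=
  ∃ (f : VH ↪ V) (P : ∀ ⦃a b⦄, H.Adj a b → G.Walk (f a) (f b)),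
    (∀ ⦃a b⦄ (h : H.Adj a b), (P h).IsPath) ∧
    (∀ ⦃a b⦄ (h : H.Adj a b), 1 ≤ (P h).length ∧ S ((P h).length - 1)) ∧
    (∀ ⦃a b⦄ (h : H.Adj a b), ∀ c : VH, f c ∈ (P h).support → c = a ∨ c = b) ∧
    ∀ ⦃a b a' b'⦄ (h : H.Adj a b) (h' : H.Adj a' b'), s(a, b) ≠ s(a', b') →
      ∀ x, x ∈ (P h).support → x ∈ (P h').support →
        (x = f a ∨ x = f b) ∧ (x = f a' ∨ x = f b')

/-- `H` is an `ℓ`-shallow minor of `G`: a minor all of whose branch sets have radius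
at most `ℓ`. -/
def IsShallowMinorOf {W V : Type} (H : SimpleGraph W) (G : SimpleGraph V)
    (ℓ : WithTop ℤ) : Prop :=
  ∃ B : W → Set V,
    (∀ w, (B w).Nonempty) ∧
    (∀ ⦃w w'⦄, w ≠ w' → Disjoint (B w) (B w')) ∧
    (∀ w, (G.induce (B w)).Connected) ∧
    (∀ w, ∃ v : B w, ∀ u : B w, (((G.induce (B w)).dist v u : ℤ) : WithTop ℤ) ≤ ℓ) ∧
    ∀ ⦃w w'⦄, H.Adj w w' → ∃ u ∈ B w, ∃ x ∈ B w', G.Adj u x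

end


section Stmt16Aux
open SimpleGraph Finset
open scoped Classical
namespace Stmt16

variable {V V' W : Type}

/-- transporting connectivity of induced subgraphs along a map. -/
lemma induce_connected_transport (G' : SimpleGraph V') (G : SimpleGraph V)
    (S' : Set V') (S : Set V) (f : S' → S)
    (hstep : ∀ a b : S', (G'.induce S').Adj a b → (G.induce S).Reachable (f a) (f b))
    (hcover : ∀ t : S, ∃ a : S', (G.induce S).Reachable t (f a))
    (hconn : (G'.induce S').Connected) : (G.induce S).Connected := by
  have key : ∀ {a b : S'} (_ : (G'.induce S').Walk a b),
      (G.induce S).Reachable (f a) (f b) := by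
    intro a b w
    induction w with
    | nil => exact SimpleGraph.Reachable.refl _
    | cons h p ih => exact (hstep _ _ h).trans ih
  rw [SimpleGraph.connected_iff]
  constructor
  · intro t u
    obtain ⟨a, ha⟩ := hcover t
    obtain ⟨b, hb⟩ := hcover u
    obtain ⟨w⟩ := hconn.preconnected a b
    exact (ha.trans (key w)).trans hb.symm
  · obtain ⟨a⟩ := hconn.nonempty
    exact ⟨f a⟩

def MinorOn {W V : Type} (K : SimpleGraph W) (G : SimpleGraph V) (s : Set V) : Prop :=
  ∃ B : W → Set V, (∀ w, B w ⊆ s) ∧ (∀ w, (B w).Nonempty) ∧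
    (∀ ⦃w w'⦄, w ≠ w' → Disjoint (B w) (B w')) ∧
    (∀ w, (G.induce (B w)).Connected) ∧
    ∀ ⦃w w'⦄, K.Adj w w' → ∃ u ∈ B w, ∃ x ∈ B w', G.Adj u x

lemma MinorOn.isMinorOf {K : SimpleGraph W} {G : SimpleGraph V} {s : Set V}
    (h : MinorOn K G s) : IsMinorOf K G := by
  obtain ⟨B, -, h1, h2, h3, h4⟩ := h
  exact ⟨B, h1, h2, h3, h4⟩

lemma minorOn_of_induce {K : SimpleGraph W} {G : SimpleGraph V} {s : Set V}
    (h : IsMinorOf K (G.induce s)) : MinorOn K G s := by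
  obtain ⟨B, h1, h2, h3, h4⟩ := h
  refine ⟨fun w => Subtype.val '' B w, fun w => ?_, fun w => (h1 w).image _, ?_, fun w => ?_, ?_⟩
  · rintro v ⟨a, -, rfl⟩; exact a.2
  · intro w w' hww
    exact Set.disjoint_image_of_injective Subtype.val_injective (h2 hww)
  · refine induce_connected_transport (G.induce s) G (B w) _
      (fun a => ⟨a.1.1, ⟨a.1, a.2, rfl⟩⟩) ?_ ?_ (h3 w)
    · intro a b hab
      exact SimpleGraph.Adj.reachable (by simpa using hab)
    · rintro ⟨t, a, ha, rfl⟩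
      exact ⟨⟨a, ha⟩, SimpleGraph.Reachable.refl _⟩
  · intro w w' hww
    obtain ⟨u, hu, x, hx, hadj⟩ := h4 hww
    exact ⟨u.1, ⟨u, hu, rfl⟩, x.1, ⟨x, hx, rfl⟩, by simpa using hadj⟩

lemma induce_singleton_connected (G : SimpleGraph V) (x : V) :
    (G.induce ({x} : Set V)).Connected := by
  rw [SimpleGraph.connected_iff]
  refine ⟨fun a b => ?_, ⟨⟨x, rfl⟩⟩⟩
  have : a = b := Subtype.ext (by rw [a.2, b.2])
  rw [this]

lemma apex {k : ℕ} (G : SimpleGraph V) (x : V)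
    (h : MinorOn (⊤ : SimpleGraph (Fin k)) G (G.neighborSet x)) :
    IsMinorOf (⊤ : SimpleGraph (Fin (k+1))) G := by
  obtain ⟨B, hsub, hne, hdisj, hconn, hadj⟩ := h
  have hxs : ∀ w (v : V), v ∈ B w → G.Adj x v := by
    intro w v hv; exact hsub w hv
  refine ⟨fun i => if h : (i : ℕ) < k then B ⟨i, h⟩ else {x}, ?_, ?_, ?_, ?_⟩
  · intro i
    by_cases h : (i : ℕ) < k
    · simpa [h] using hne ⟨i, h⟩
    · simp [h]
  · intro i j hij
    have hfin : ∀ m : Fin (k+1), ¬ (m : ℕ) < k → (m : ℕ) = k := by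
      intro m hm; omega
    by_cases hi : (i : ℕ) < k <;> by_cases hj : (j : ℕ) < k
    · have : (⟨i, hi⟩ : Fin k) ≠ ⟨j, hj⟩ := by
        intro hc; apply hij; apply Fin.ext; simpa using congrArg Fin.val hc
      simpa [hi, hj] using hdisj this
    · simp only [dif_pos hi, dif_neg hj]
      rw [Set.disjoint_singleton_right]
      intro hx; exact G.loopless.irrefl x (hxs _ _ hx)
    · simp only [dif_neg hi, dif_pos hj]
      rw [Set.disjoint_singleton_left]
      intro hx; exact G.loopless.irrefl x (hxs _ _ hx)
    · exact absurd (Fin.ext ((hfin i hi).trans (hfin j hj).symm)) hij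
  · intro i
    by_cases h : (i : ℕ) < k
    · dsimp only; rw [dif_pos h]; exact hconn ⟨i, h⟩
    · dsimp only; rw [dif_neg h]; exact induce_singleton_connected G x
  · intro i j hij
    rw [SimpleGraph.top_adj] at hij
    by_cases hi : (i : ℕ) < k <;> by_cases hj : (j : ℕ) < k
    · have : (⊤ : SimpleGraph (Fin k)).Adj ⟨i, hi⟩ ⟨j, hj⟩ := by
        rw [SimpleGraph.top_adj]
        intro hc; apply hij; apply Fin.ext; simpa using congrArg Fin.val hc
      simpa [hi, hj] using hadj this
    · obtain ⟨v, hv⟩ := hne ⟨i, hi⟩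
      refine ⟨v, by simp [hi, hv], x, by simp [hj], (hxs _ _ hv).symm⟩
    · obtain ⟨v, hv⟩ := hne ⟨j, hj⟩
      refine ⟨x, by simp [hi], v, by simp [hj, hv], hxs _ _ hv⟩
    · have : (i:ℕ) = k := by omega
      have : (j:ℕ) = k := by omega
      exact absurd (Fin.ext (by omega)) hij
def contr (G : SimpleGraph V) (x y : V) : SimpleGraph {v : V // v ≠ y} where
  Adj a b := a ≠ b ∧ (G.Adj a.1 b.1 ∨ (a.1 = x ∧ G.Adj y b.1) ∨ (b.1 = x ∧ G.Adj y a.1))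
  symm := by
    constructor
    rintro a b ⟨hne, h | ⟨h1, h2⟩ | ⟨h1, h2⟩⟩
    · exact ⟨hne.symm, Or.inl h.symm⟩
    · exact ⟨hne.symm, Or.inr (Or.inr ⟨h1, h2⟩)⟩
    · exact ⟨hne.symm, Or.inr (Or.inl ⟨h1, h2⟩)⟩
  loopless := by constructor; rintro a ⟨hne, -⟩; exact hne rfl

lemma minor_of_contr {K : SimpleGraph W} {G : SimpleGraph V} {x y : V} (hxy : G.Adj x y)
    (h : IsMinorOf K (contr G x y)) : IsMinorOf K G := by
  classical
  have hne : x ≠ y := hxy.ne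
  set xb : {v : V // v ≠ y} := ⟨x, hne⟩ with hxb
  obtain ⟨B, h1, h2, h3, h4⟩ := h
  set B' : W → Set V := fun w => Subtype.val '' B w ∪ (if xb ∈ B w then {y} else ∅) with hB'
  have hyim : ∀ w, y ∉ Subtype.val '' B w := by
    rintro w ⟨a, -, hval⟩; exact a.2 hval
  have hxmem : ∀ w, xb ∈ B w → (x ∈ B' w ∧ y ∈ B' w) := by
    intro w hw
    exact ⟨Or.inl ⟨xb, hw, rfl⟩, Or.inr (by simp [hw])⟩
  have hmem' : ∀ w (v : V), v ∈ B' w → (∃ a ∈ B w, a.1 = v) ∨ (v = y ∧ xb ∈ B w) := by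
    intro w v hv
    rcases hv with ⟨a, ha, rfl⟩ | hv
    · exact Or.inl ⟨a, ha, rfl⟩
    · by_cases hc : xb ∈ B w
      · rw [if_pos hc] at hv; exact Or.inr ⟨hv, hc⟩
      · rw [if_neg hc] at hv; exact absurd hv (Set.notMem_empty v)
  refine ⟨B', ?_, ?_, ?_, ?_⟩
  · intro w
    obtain ⟨a, ha⟩ := h1 w
    exact ⟨a.1, Or.inl ⟨a, ha, rfl⟩⟩
  · intro w w' hww
    rw [Set.disjoint_left]
    intro v hv hv'
    rcases hmem' w v hv with ⟨a, ha, rfl⟩ | ⟨hvy, hw⟩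
    · rcases hmem' w' a.1 hv' with ⟨b, hb, hba⟩ | ⟨hay, -⟩
      · have : a = b := Subtype.ext hba.symm
        subst this
        exact Set.disjoint_left.mp (h2 hww) ha hb
      · exact a.2 hay
    · subst hvy
      rcases hmem' w' v hv' with ⟨b, hb, hby⟩ | ⟨-, hw'⟩
      · exact b.2 hby
      · exact Set.disjoint_left.mp (h2 hww) hw hw'
  · intro w
    -- connectivity
    have hsubB : ∀ a : B w, a.1.1 ∈ B' w := fun a => Or.inl ⟨a.1, a.2, rfl⟩
    refine induce_connected_transport (contr G x y) G (B w) (B' w)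
      (fun a => ⟨a.1.1, hsubB a⟩) ?_ ?_ (h3 w)
    · rintro a b hab
      have hab' : (contr G x y).Adj a.1 b.1 := hab
      obtain ⟨hne', hor⟩ := hab'
      have hBa : a.1 ∈ B w := a.2
      have hBb : b.1 ∈ B w := b.2
      rcases hor with hadj | ⟨hax, hyb⟩ | ⟨hbx, hya⟩
      · exact SimpleGraph.Adj.reachable (by simpa using hadj)
      · -- a.1 = xb, so y ∈ B' w; path a.1.1 = x — y — b.1.1
        have haxb : a.1 = xb := Subtype.ext hax
        have hyB' : y ∈ B' w := (hxmem w (haxb ▸ hBa)).2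
        have r1 : (G.induce (B' w)).Adj ⟨a.1.1, hsubB a⟩ ⟨y, hyB'⟩ := by
          simpa [hax] using hxy
        have r2 : (G.induce (B' w)).Adj ⟨y, hyB'⟩ ⟨b.1.1, hsubB b⟩ := by
          simpa using hyb
        exact (r1.reachable).trans r2.reachable
      · have hbxb : b.1 = xb := Subtype.ext hbx
        have hyB' : y ∈ B' w := (hxmem w (hbxb ▸ hBb)).2
        have r1 : (G.induce (B' w)).Adj ⟨a.1.1, hsubB a⟩ ⟨y, hyB'⟩ := by
          simpa using hya.symm
        have r2 : (G.induce (B' w)).Adj ⟨y, hyB'⟩ ⟨b.1.1, hsubB b⟩ := by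
          simpa [hbx] using hxy.symm
        exact (r1.reachable).trans r2.reachable
    · rintro ⟨t, ht⟩
      rcases hmem' w t ht with ⟨a, ha, hat⟩ | ⟨rfl, hw⟩
      · subst hat
        exact ⟨⟨a, ha⟩, SimpleGraph.Reachable.refl _⟩
      · refine ⟨⟨xb, hw⟩, SimpleGraph.Adj.reachable ?_⟩
        have hxB' : x ∈ B' w := (hxmem w hw).1
        simpa using hxy.symm
  · intro w w' hww
    obtain ⟨u, hu, v, hv, huv⟩ := h4 hww
    obtain ⟨hne', hor⟩ := huv
    rcases hor with hadj | ⟨hux, hyv⟩ | ⟨hvx, hyu⟩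
    · exact ⟨u.1, Or.inl ⟨u, hu, rfl⟩, v.1, Or.inl ⟨v, hv, rfl⟩, hadj⟩
    · have : u = xb := Subtype.ext hux
      subst this
      exact ⟨y, (hxmem w hu).2, v.1, Or.inl ⟨v, hv, rfl⟩, hyv⟩
    · have : v = xb := Subtype.ext hvx
      subst this
      exact ⟨u.1, Or.inl ⟨u, hu, rfl⟩, y, (hxmem w' hv).2, hyu.symm⟩

variable [Fintype V] [Fintype V']

lemma edge_lift (G' : SimpleGraph V') (f : V' → V) (A : Finset (Sym2 V))
    (h : ∀ e ∈ A, ∃ e' ∈ G'.edgeFinset, Sym2.map f e' = e) :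
    A.card ≤ G'.edgeFinset.card := by
  have hsub : A ⊆ G'.edgeFinset.image (Sym2.map f) := by
    intro e he
    obtain ⟨e', he', rfl⟩ := h e he
    exact Finset.mem_image_of_mem _ he'
  exact le_trans (Finset.card_le_card hsub) Finset.card_image_le

lemma del_count (G : SimpleGraph V) (v : V) :
    G.edgeFinset.card ≤ (G.induce {u | u ≠ v}).edgeFinset.card + G.degree v := by
  classical
  have hsplit : G.edgeFinset.card =
      (G.edgeFinset.filter (fun e => v ∉ e)).card + (G.edgeFinset.filter (fun e => v ∈ e)).card := by
    rw [add_comm]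
    exact (Finset.card_filter_add_card_filter_not (fun e => v ∈ e)).symm
  have hdeg : (G.edgeFinset.filter (fun e => v ∈ e)).card = G.degree v := by
    rw [← G.incidenceFinset_eq_filter v]
    exact G.card_incidenceFinset_eq_degree v
  have hmain : (G.edgeFinset.filter (fun e => v ∉ e)).card ≤ (G.induce {u | u ≠ v}).edgeFinset.card := by
    apply edge_lift _ (Subtype.val : {u | u ≠ v} → V)
    intro e he
    rw [Finset.mem_filter] at he
    obtain ⟨he, hv⟩ := he
    revert he hv
    refine Sym2.ind (fun a b => ?_) e
    intro he hv
    rw [Sym2.mem_iff] at hv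
    push_neg at hv
    rw [SimpleGraph.mem_edgeFinset, SimpleGraph.mem_edgeSet] at he
    refine ⟨s(⟨a, hv.1.symm⟩, ⟨b, hv.2.symm⟩), ?_, by rw [Sym2.map_pair_eq]⟩
    rw [SimpleGraph.mem_edgeFinset, SimpleGraph.mem_edgeSet]
    exact he
  omega

lemma contr_count (G : SimpleGraph V) (x y : V) (hxy : G.Adj x y) :
    G.edgeFinset.card ≤
      (contr G x y).edgeFinset.card + 1 + (G.neighborFinset x ∩ G.neighborFinset y).card := by
  classical
  set A : Finset (Sym2 V) := G.edgeFinset.filter (fun e => y ∉ e) with hA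
  set Bv : Finset V := ((G.neighborFinset y).erase x) \ G.neighborFinset x with hBv
  set B : Finset (Sym2 V) := Bv.image (fun b => s(x, b)) with hB
  have hxy' : x ≠ y := hxy.ne
  -- facts about Bv members
  have hBvmem : ∀ b ∈ Bv, b ≠ x ∧ b ≠ y ∧ G.Adj y b ∧ ¬ G.Adj x b := by
    intro b hb
    rw [hBv, Finset.mem_sdiff, Finset.mem_erase, SimpleGraph.mem_neighborFinset,
      SimpleGraph.mem_neighborFinset] at hb
    exact ⟨hb.1.1, (hb.1.2).ne', hb.1.2, hb.2⟩
  have hdisj : Disjoint A B := by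
    rw [Finset.disjoint_right]
    intro e he hea
    rw [hB, Finset.mem_image] at he
    obtain ⟨b, hb, rfl⟩ := he
    rw [hA, Finset.mem_filter, SimpleGraph.mem_edgeFinset, SimpleGraph.mem_edgeSet] at hea
    exact (hBvmem b hb).2.2.2 hea.1
  have hcard : A.card + B.card ≤ (contr G x y).edgeFinset.card := by
    rw [← Finset.card_union_of_disjoint hdisj]
    apply edge_lift (contr G x y) (Subtype.val : {v : V // v ≠ y} → V)
    intro e he
    rw [Finset.mem_union] at he
    rcases he with he | he
    · rw [hA, Finset.mem_filter] at he
      obtain ⟨he, hy⟩ := he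
      revert he hy
      refine Sym2.ind (fun a b => ?_) e
      intro he hy
      rw [Sym2.mem_iff] at hy
      push_neg at hy
      rw [SimpleGraph.mem_edgeFinset, SimpleGraph.mem_edgeSet] at he
      refine ⟨s(⟨a, hy.1.symm⟩, ⟨b, hy.2.symm⟩), ?_, by rw [Sym2.map_pair_eq]⟩
      rw [SimpleGraph.mem_edgeFinset, SimpleGraph.mem_edgeSet]
      refine ⟨fun hc => ?_, Or.inl he⟩
      have hab : a = b := congrArg Subtype.val hc
      exact G.loopless.irrefl a (hab ▸ he)
    · rw [hB, Finset.mem_image] at he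
      obtain ⟨b, hb, rfl⟩ := he
      obtain ⟨hbx, hby, hyb, -⟩ := hBvmem b hb
      refine ⟨s(⟨x, hxy'⟩, ⟨b, hby⟩), ?_, by rw [Sym2.map_pair_eq]⟩
      rw [SimpleGraph.mem_edgeFinset, SimpleGraph.mem_edgeSet]
      refine ⟨fun hc => ?_, Or.inr (Or.inl ⟨rfl, hyb⟩)⟩
      have : x = b := congrArg Subtype.val hc
      exact hbx this.symm
  have hAcard : A.card + G.degree y = G.edgeFinset.card := by
    have := Finset.card_filter_add_card_filter_not (s := G.edgeFinset) (p := fun e => y ∈ e)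
    have hdeg : (G.edgeFinset.filter (fun e => y ∈ e)).card = G.degree y := by
      rw [← G.incidenceFinset_eq_filter y]
      exact G.card_incidenceFinset_eq_degree y
    simp only [hA]
    omega
  have hBcard : B.card = Bv.card := by
    rw [hB]
    apply Finset.card_image_of_injOn
    intro a ha b hb hab
    have ha' := (hBvmem a ha).1
    rcases Sym2.eq_iff.mp hab with ⟨-, h⟩ | ⟨h1, h2⟩
    · exact h
    · exact absurd h2 ha'
  have hx_mem : x ∈ G.neighborFinset y := by
    rw [SimpleGraph.mem_neighborFinset]; exact hxy.symm
  have herase : ((G.neighborFinset y).erase x).card + 1 = G.degree y := by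
    rw [Finset.card_erase_add_one hx_mem]; rfl
  have hsplit : Bv.card + (((G.neighborFinset y).erase x) ∩ G.neighborFinset x).card
      = ((G.neighborFinset y).erase x).card := by
    rw [hBv]
    exact Finset.card_sdiff_add_card_inter _ _
  have hint : (((G.neighborFinset y).erase x) ∩ G.neighborFinset x).card
      ≤ (G.neighborFinset x ∩ G.neighborFinset y).card := by
    apply Finset.card_le_card
    intro u hu
    rw [Finset.mem_inter] at hu ⊢
    exact ⟨hu.2, Finset.mem_of_mem_erase hu.1⟩
  omega
lemma nbhd_degree (G : SimpleGraph V) (x v : V) (hv : v ∈ G.neighborSet x) :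
    (G.neighborFinset x ∩ G.neighborFinset v).card
      ≤ (G.induce (G.neighborSet x)).degree ⟨v, hv⟩ := by
  classical
  rw [SimpleGraph.degree]
  apply Finset.card_le_card_of_injOn
    (fun u => if h : u ∈ G.neighborSet x then (⟨u, h⟩ : ↥(G.neighborSet x)) else ⟨v, hv⟩)
  · intro u hu
    rw [Finset.mem_coe, Finset.mem_inter, SimpleGraph.mem_neighborFinset, SimpleGraph.mem_neighborFinset] at hu
    have h1 : u ∈ G.neighborSet x := hu.1
    rw [Finset.mem_coe, SimpleGraph.mem_neighborFinset]
    simp only [dif_pos h1]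
    exact hu.2
  · intro a ha b hb hab
    rw [Finset.mem_coe, Finset.mem_inter, SimpleGraph.mem_neighborFinset] at ha hb
    have h1 : a ∈ G.neighborSet x := ha.1
    have h2 : b ∈ G.neighborSet x := hb.1
    simp only [dif_pos h1, dif_pos h2] at hab
    exact congrArg Subtype.val hab

-- degree in induced graph on finset coercion
lemma filter_le_induce_degree (G : SimpleGraph V) (X : Finset V) (x : V) (hx : x ∈ X) :
    (X.filter (G.Adj x)).card ≤ (G.induce (↑X : Set V)).degree ⟨x, hx⟩ := by
  classical
  rw [SimpleGraph.degree]
  apply Finset.card_le_card_of_injOn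
    (fun u => if h : u ∈ (↑X : Set V) then (⟨u, h⟩ : ↥(↑X : Set V)) else ⟨x, hx⟩)
  · intro u hu
    rw [Finset.mem_coe, Finset.mem_filter] at hu
    have h1 : u ∈ (↑X : Set V) := hu.1
    rw [Finset.mem_coe, SimpleGraph.mem_neighborFinset]
    simp only [dif_pos h1]
    exact hu.2
  · intro a ha b hb hab
    rw [Finset.mem_coe, Finset.mem_filter] at ha hb
    have h1 : a ∈ (↑X : Set V) := ha.1
    have h2 : b ∈ (↑X : Set V) := hb.1
    simp only [dif_pos h1, dif_pos h2] at hab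
    exact congrArg Subtype.val hab
lemma mindeg_edges {V : Type} [Fintype V] (G : SimpleGraph V) (δ : ℕ) (h : ∀ v, δ ≤ G.degree v) :
    δ * Fintype.card V ≤ 2 * G.edgeFinset.card := by
  rw [← G.sum_degrees_eq_twice_card_edges]
  calc δ * Fintype.card V = ∑ _v : V, δ := by rw [Finset.sum_const, Finset.card_univ]; ring
  _ ≤ ∑ v : V, G.degree v := Finset.sum_le_sum (fun v _ => h v)

theorem kminor (h : ℕ) : ∀ (V : Type) [Fintype V] (G : SimpleGraph V),
    1 ≤ G.edgeFinset.card → 2^h * Fintype.card V ≤ G.edgeFinset.card →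
    IsMinorOf (⊤ : SimpleGraph (Fin h)) G := by
  induction h with
  | zero =>
    intro V _ G _ _
    refine ⟨fun i => Fin.elim0 i, fun i => Fin.elim0 i, ?_, fun i => Fin.elim0 i, ?_⟩
    · intro i; exact Fin.elim0 i
    · intro i; exact Fin.elim0 i
  | succ k ih =>
    suffices H : ∀ (n : ℕ) (V : Type) [Fintype V] (G : SimpleGraph V), Fintype.card V = n →
        1 ≤ G.edgeFinset.card → 2^(k+1) * n ≤ G.edgeFinset.card →
        IsMinorOf (⊤ : SimpleGraph (Fin (k+1))) G by
      intro V _ G h1 h2; exact H _ V G rfl h1 h2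
    intro n
    induction n using Nat.strong_induction_on with
    | _ n ihn =>
    intro V _ G hcard h1 h2
    have hc1 : 1 ≤ 2^(k+1) := Nat.one_le_two_pow
    have hn2 : 2 ≤ n := by
      obtain ⟨e, he⟩ := Finset.card_pos.mp h1
      revert he
      refine Sym2.ind (fun a b => ?_) e
      intro he
      rw [SimpleGraph.mem_edgeFinset, SimpleGraph.mem_edgeSet] at he
      have : Nontrivial V := ⟨a, b, he.ne⟩
      rw [← hcard]
      exact Fintype.one_lt_card
    have hmul : 2^(k+1) * (n-1) + 2^(k+1) = 2^(k+1) * n := by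
      have hn : n - 1 + 1 = n := by omega
      rw [← Nat.mul_succ]
      congr 1
    have hmono : 2^(k+1) * 1 ≤ 2^(k+1) * (n-1) := Nat.mul_le_mul_left _ (by omega)
    have hone : 2^(k+1) * 1 = 2^(k+1) := by ring
    by_cases hcase1 : ∃ v, G.degree v ≤ 2^(k+1)
    · obtain ⟨v, hv⟩ := hcase1
      have hcard' : Fintype.card {u : V // u ∈ ({u : V | u ≠ v} : Set V)} = n - 1 := by
        rw [← hcard]
        simp [Fintype.card_subtype_compl]
      have hdel := del_count G v
      have hub : 2^(k+1) * (n-1) ≤ (G.induce {u | u ≠ v}).edgeFinset.card := by omega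
      have h1b : 1 ≤ (G.induce {u | u ≠ v}).edgeFinset.card := by omega
      exact (minorOn_of_induce (ihn (n-1) (by omega) _ _ hcard' h1b hub)).isMinorOf
    · push_neg at hcase1
      by_cases hcase2 : ∃ x y, G.Adj x y ∧ (G.neighborFinset x ∩ G.neighborFinset y).card < 2^(k+1)
      · obtain ⟨x, y, hxy, hcom⟩ := hcase2
        have hcard' : Fintype.card {u : V // u ≠ y} = n - 1 := by
          rw [← hcard]
          simp [Fintype.card_subtype_compl]
        have hcc := contr_count G x y hxy
        have hub : 2^(k+1) * (n-1) ≤ (contr G x y).edgeFinset.card := by omega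
        have h1b : 1 ≤ (contr G x y).edgeFinset.card := by omega
        exact minor_of_contr hxy (ihn (n-1) (by omega) _ _ hcard' h1b hub)
      · push_neg at hcase2
        obtain ⟨e, he⟩ := Finset.card_pos.mp h1
        have hx : ∃ x : V, True := by
          refine Sym2.ind (fun a b => fun _ => ⟨a, trivial⟩) e he
        obtain ⟨x, -⟩ := hx
        have hns : Fintype.card ↥(G.neighborSet x) = G.degree x :=
          G.card_neighborSet_eq_degree x
        have hdegs : ∀ vs : ↥(G.neighborSet x),
            2^(k+1) ≤ (G.induce (G.neighborSet x)).degree vs := by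
          rintro ⟨v, hv⟩
          have hadj : G.Adj x v := hv
          have h5 := hcase2 x v hadj
          have h6 := nbhd_degree G x v hv
          omega
        have hsum := mindeg_edges (G.induce (G.neighborSet x)) (2^(k+1)) hdegs
        have hdx := hcase1 x
        have hprod : 2^(k+1) * 1 ≤ 2^(k+1) * Fintype.card ↥(G.neighborSet x) :=
          Nat.mul_le_mul_left _ (by omega)
        have hedge1 : 1 ≤ (G.induce (G.neighborSet x)).edgeFinset.card := by
          have h8 : ∀ m : ℕ, 2^(k+1) * Fintype.card ↥(G.neighborSet x) ≤ 2 * m → 1 ≤ m := by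
            intro m hm; omega
          convert h8 _ hsum
        have heq : 2^(k+1) * Fintype.card ↥(G.neighborSet x)
            = 2 * (2^k * Fintype.card ↥(G.neighborSet x)) := by ring
        have hedge2 : 2^k * Fintype.card ↥(G.neighborSet x)
            ≤ (G.induce (G.neighborSet x)).edgeFinset.card := by
          have h9 : ∀ m : ℕ, 2^(k+1) * Fintype.card ↥(G.neighborSet x) ≤ 2 * m →
              2^k * Fintype.card ↥(G.neighborSet x) ≤ m := by
            intro m hm; omega
          convert h9 _ hsum
        exact apex G x (minorOn_of_induce (ih ↥(G.neighborSet x) _ hedge1 hedge2))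
lemma isMinorOf_of_top {VH : Type} [Fintype VH] (H : SimpleGraph VH) {V : Type} (G : SimpleGraph V)
    (h : IsMinorOf (⊤ : SimpleGraph (Fin (Fintype.card VH))) G) : IsMinorOf H G := by
  obtain ⟨B, h1, h2, h3, h4⟩ := h
  let e := Fintype.equivFin VH
  refine ⟨fun w => B (e w), fun w => h1 _, ?_, fun w => h3 _, ?_⟩
  · intro w w' hww
    exact h2 (fun hc => hww (e.injective hc))
  · intro w w' hadj
    exact h4 (by rw [SimpleGraph.top_adj]; exact fun hc => hadj.ne (e.injective hc))

lemma exists_lowdeg {VH : Type} [Fintype VH] (H : SimpleGraph VH) {V : Type} [Fintype V]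
    (G : SimpleGraph V) (hfree : ¬ IsMinorOf H G) (X : Finset V) (hX : X.Nonempty) :
    ∃ x ∈ X, (X.filter (G.Adj x)).card ≤ 2^(Fintype.card VH + 1) := by
  by_contra hcon
  push_neg at hcon
  apply hfree
  apply isMinorOf_of_top
  apply MinorOn.isMinorOf (s := (↑X : Set V))
  apply minorOn_of_induce
  apply kminor
  · -- 1 ≤ edges
    have hdeg : ∀ vx : ↥(↑X : Set V), 2^(Fintype.card VH+1) + 1 ≤ (G.induce (↑X : Set V)).degree vx := by
      rintro ⟨x, hx⟩
      have h5 := hcon x hx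
      have h6 := filter_le_induce_degree G X x hx
      omega
    have hsum := mindeg_edges (G.induce (↑X : Set V)) (2^(Fintype.card VH+1)+1) (hdeg)
    obtain ⟨x0, hx0⟩ := hX
    have hcX : 1 ≤ Fintype.card ↥(↑X : Set V) :=
      Fintype.card_pos_iff.mpr ⟨⟨x0, hx0⟩⟩
    have hprod : (2^(Fintype.card VH+1)+1) * 1 ≤ (2^(Fintype.card VH+1)+1) * Fintype.card ↥(↑X : Set V) :=
      Nat.mul_le_mul_left _ hcX
    have h1 : 1 ≤ 2^(Fintype.card VH+1) := Nat.one_le_two_pow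
    omega
  · have hdeg : ∀ vx : ↥(↑X : Set V), 2^(Fintype.card VH+1) + 1 ≤ (G.induce (↑X : Set V)).degree vx := by
      rintro ⟨x, hx⟩
      have h5 := hcon x hx
      have h6 := filter_le_induce_degree G X x hx
      omega
    have hsum := mindeg_edges (G.induce (↑X : Set V)) (2^(Fintype.card VH+1)+1) (hdeg)
    have heq : (2^(Fintype.card VH+1)+1) * Fintype.card ↥(↑X : Set V)
        = 2 * (2^(Fintype.card VH) * Fintype.card ↥(↑X : Set V)) + Fintype.card ↥(↑X : Set V) := by ring
    omega
lemma build {V : Type} [Fintype V] (G : SimpleGraph V) (d r : ℕ)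
    (hdeg : ∀ X : Finset V, X.Nonempty → ∃ x ∈ X, (X.filter (G.Adj x)).card ≤ d) :
    ∀ X : Finset V, ∃ C : Finset (Finset (Sym2 V)),
      (∀ S ∈ C, S.card = r ∧ (S : Set (Sym2 V)) ⊆ G.edgeSet) ∧
      C.card ≤ Nat.choose d r * X.card ∧
      ∀ R : G.Subgraph, R.verts.Nonempty → R.verts ⊆ (↑X : Set V) →
        (∀ v ∈ R.verts, r ≤ (R.neighborSet v).ncard) →
        ∃ S ∈ C, (S : Set (Sym2 V)) ⊆ R.edgeSet := by
  intro X
  induction X using Finset.strongInduction with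
  | _ X ihX =>
  rcases Finset.eq_empty_or_nonempty X with rfl | hXne
  · refine ⟨∅, by simp, by simp, ?_⟩
    intro R hR hsub _
    obtain ⟨v, hv⟩ := hR
    exact absurd (hsub hv) (by simp)
  · obtain ⟨x, hx, hxdeg⟩ := hdeg X hXne
    set Nx := X.filter (G.Adj x) with hNx
    obtain ⟨C', hC'1, hC'2, hC'3⟩ := ihX (X.erase x) (Finset.erase_ssubset hx)
    set Cx : Finset (Finset (Sym2 V)) :=
      (Nx.powersetCard r).image (fun T => T.image (fun u => s(x, u))) with hCx
    refine ⟨C' ∪ Cx, ?_, ?_, ?_⟩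
    · intro S hS
      rcases Finset.mem_union.mp hS with hS | hS
      · exact hC'1 S hS
      · rw [hCx, Finset.mem_image] at hS
        obtain ⟨T, hT, rfl⟩ := hS
        rw [Finset.mem_powersetCard] at hT
        have hTN : ∀ u ∈ T, G.Adj x u := by
          intro u hu
          have := hT.1 hu
          rw [hNx, Finset.mem_filter] at this
          exact this.2
        constructor
        · rw [Finset.card_image_of_injOn, hT.2]
          intro a ha b hb hab
          rcases Sym2.eq_iff.mp hab with ⟨-, hh⟩ | ⟨h1, h2⟩
          · exact hh
          · exact absurd h2.symm (hTN a ha).ne'.symm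
        · intro e he
          rw [Finset.coe_image] at he
          obtain ⟨u, hu, rfl⟩ := he
          exact (hTN u hu)
    · have h1 : Cx.card ≤ Nat.choose d r := by
        calc Cx.card ≤ (Nx.powersetCard r).card := Finset.card_image_le
        _ = Nx.card.choose r := Finset.card_powersetCard r Nx
        _ ≤ Nat.choose d r := Nat.choose_le_choose r hxdeg
      have h2 : (X.erase x).card + 1 = X.card := Finset.card_erase_add_one hx
      calc (C' ∪ Cx).card ≤ C'.card + Cx.card := Finset.card_union_le _ _
      _ ≤ Nat.choose d r * (X.erase x).card + Nat.choose d r := by omega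
      _ = Nat.choose d r * ((X.erase x).card + 1) := by ring
      _ = Nat.choose d r * X.card := by rw [h2]
    · intro R hRne hRsub hRdeg
      by_cases hxR : x ∈ R.verts
      · -- use a star at x
        have hNR : (R.neighborSet x).toFinset ⊆ Nx := by
          intro u hu
          rw [Set.mem_toFinset] at hu
          have hadj : R.Adj x u := hu
          rw [hNx, Finset.mem_filter]
          exact ⟨hRsub (R.edge_vert hadj.symm), hadj.adj_sub⟩
        have hcard : r ≤ (R.neighborSet x).toFinset.card := by
          rw [← Set.ncard_eq_toFinset_card']
          exact hRdeg x hxR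
        obtain ⟨T, hTsub, hTcard⟩ := Finset.exists_subset_card_eq hcard
        refine ⟨T.image (fun u => s(x, u)), ?_, ?_⟩
        · apply Finset.mem_union_right
          rw [hCx, Finset.mem_image]
          exact ⟨T, Finset.mem_powersetCard.mpr ⟨hTsub.trans hNR, hTcard⟩, rfl⟩
        · intro e he
          rw [Finset.coe_image] at he
          obtain ⟨u, hu, rfl⟩ := he
          have : u ∈ R.neighborSet x := by
            have := hTsub hu
            rwa [Set.mem_toFinset] at this
          exact SimpleGraph.Subgraph.mem_edgeSet.mpr this
      · have hsub' : R.verts ⊆ (↑(X.erase x) : Set V) := by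
          intro v hv
          rw [Finset.coe_erase, Set.mem_diff]
          exact ⟨hRsub hv, fun hc => hxR (by rwa [Set.mem_singleton_iff.mp hc] at hv)⟩
        obtain ⟨S, hS, hSsub⟩ := hC'3 R hRne hsub' hRdeg
        exact ⟨S, Finset.mem_union_left _ hS, hSsub⟩

end Stmt16
end Stmt16Aux

/-- Lemma 5.1 (weak general collection). -/
theorem stmt_16 (r : ℕ) (hr : 0 < r) {VH : Type} [Fintype VH] (H : SimpleGraph VH) :
    ∃ c : ℝ, 0 < c ∧
      ∀ (V : Type) [Fintype V] (G : SimpleGraph V), ¬ IsMinorOf H G →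
        ∃ C : Finset (Finset (Sym2 V)),
          (∀ S ∈ C, S.card = r ∧ (S : Set (Sym2 V)) ⊆ G.edgeSet) ∧
          (C.card : ℝ) ≤ c * (Fintype.card V : ℝ) ∧
          ∀ R : G.Subgraph, R.verts.Nonempty →
            (∀ v ∈ R.verts, r ≤ (R.neighborSet v).ncard) →
            ∃ S ∈ C, (S : Set (Sym2 V)) ⊆ R.edgeSet := by
  
  classical
  refine ⟨(Nat.choose (2^(Fintype.card VH + 1)) r : ℝ) + 1, by positivity, ?_⟩
  intro V _ G hfree
  obtain ⟨C, hC1, hC2, hC3⟩ := Stmt16.build G (2^(Fintype.card VH + 1)) r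
    (fun X hX => Stmt16.exists_lowdeg H G hfree X hX) Finset.univ
  refine ⟨C, hC1, ?_, ?_⟩
  · have h2 : (C.card : ℝ) ≤ ((Nat.choose (2^(Fintype.card VH + 1)) r * (Finset.univ : Finset V).card : ℕ) : ℝ) := by
      exact_mod_cast hC2
    rw [Nat.cast_mul, Finset.card_univ] at h2
    have h3 : (0:ℝ) ≤ (Fintype.card V : ℝ) := Nat.cast_nonneg _
    nlinarith
  · intro R hR hdeg
    exact hC3 R hR (by rw [Finset.coe_univ]; exact Set.subset_univ _) hdeg
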